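/- Let (M,g) be an oriented Riemannian m-manifold of constant sectional curvature k. The metric contact manifold (SM, g̃ = ¼g, η = ½μ, ξ = 2θᵗU, φ = θ − U⊗μ − θᵗ) is η-Einstein (i.e. Ric_{g̃} = λ·g̃ + ν·η⊗η with λ, ν constants) if and only if k = 1 or k = m − 2. -/
import Mathlib


noncomputable section

/-!
**Statement 12.**  Let `(M,g)` be an oriented Riemannian `m`-manifold of
constant sectional curvature `k`.  The metric contact manifold
`(SM, g̃ = ¼g, η = ½μ, ξ = 2θᵗU, φ = θ − U⊗μ − θᵗ)` is `η`-Einstein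
(i.e. `Ric_{g̃} = λ·g̃ + ν·η⊗η` with `λ, ν` constants) if and only if
`k = 1` or `k = m − 2`.

Abstract model:  `W` plays the role of the space of vector fields on the unit
tangent sphere bundle `SM` with the Sasaki metric `g`; `hor`/`ver` are the
horizontal/vertical projections of `TSM = H ⊕ V`, `θ` the canonical
endomorphism with adjoint `θᵗ`, `U` the canonical vertical vector field, so
that `μ(X) = ⟨U, θX⟩`, `η = ½μ` and `g̃ = ¼g`.  The hypothesis `hRic` records
the Ricci tensor of `(SM, g̃)` for a base of constant sectional curvature `k`:
`Ric_{g̃}(X,Y) = ((m−1)k − k²/2)⟨Xʰ,Yʰ⟩ + (m−2+k²/2)⟨Xᵛ,Yᵛ⟩ + (k²/2)(2−m)μ(X)μ(Y)`.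
The remaining hypotheses provide a horizontal unit vector orthogonal to the
Reeb direction, a vertical unit vector, and the geodesic-spray direction
`θᵗU` itself.
-/

theorem unit_tangent_bundle_eta_einstein_iff
    {W : Type} [AddCommGroup W] [Module ℝ W]
    (m : ℕ) (hm : 3 ≤ m) (k : ℝ)
    (g : W → W → ℝ) (hor ver theta thetat : W →ₗ[ℝ] W) (U : W)
    (Ric : W → W → ℝ)
    (hsplit : ∀ X Y, g X Y = g (hor X) (hor Y) + g (ver X) (ver Y))
    -- the Ricci tensor of `(SM, g̃ = ¼g)` for constant sectional curvature `k`
    (hRic : ∀ X Y, Ric X Y = (((m : ℝ) - 1) * k - k^2/2) * g (hor X) (hor Y)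
        + ((m : ℝ) - 2 + k^2/2) * g (ver X) (ver Y)
        + k^2/2 * (2 - (m : ℝ)) * (g U (theta X)) * (g U (theta Y)))
    -- a horizontal unit vector orthogonal to the Reeb direction
    (X₀ : W) (hX₀ : hor X₀ = X₀ ∧ ver X₀ = 0 ∧ g U (theta X₀) = 0 ∧ g X₀ X₀ = 1)
    -- a vertical unit vector
    (X₁ : W) (hX₁ : hor X₁ = 0 ∧ ver X₁ = X₁ ∧ g U (theta X₁) = 0 ∧ g X₁ X₁ = 1)
    -- the geodesic-spray direction `θᵗU` (so that `ξ = 2θᵗU`)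
    (hξ : hor (thetat U) = thetat U ∧ ver (thetat U) = 0
        ∧ g U (theta (thetat U)) = 1 ∧ g (thetat U) (thetat U) = 1) :
    -- `η`-Einstein  ↔  `k = 1 ∨ k = m − 2`
    (∃ lam nu : ℝ, ∀ X Y, Ric X Y
        = lam * ((1/4 : ℝ) * g X Y)
          + nu * ((1/2 : ℝ) * g U (theta X)) * ((1/2 : ℝ) * g U (theta Y)))
    ↔ (k = 1 ∨ k = (m : ℝ) - 2) := by
  obtain ⟨h0h, h0v, h0m, h0g⟩ := hX₀
  obtain ⟨h1h, h1v, h1m, h1g⟩ := hX₁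
  constructor
  · rintro ⟨lam, nu, h⟩
    have e0 := h X₀ X₀
    have e1 := h X₁ X₁
    rw [hRic] at e0 e1
    rw [h0h, h0v, h0m, h0g] at e0
    rw [h1h, h1v, h1m, h1g] at e1
    have hg0 : g X₀ X₀ = g (hor X₀) (hor X₀) + g (ver X₀) (ver X₀) := hsplit X₀ X₀
    rw [h0h, h0v, h0g] at hg0
    have hg1 : g X₁ X₁ = g (hor X₁) (hor X₁) + g (ver X₁) (ver X₁) := hsplit X₁ X₁
    rw [h1h, h1v, h1g] at hg1
    have hv0 : g (0:W) (0:W) = 0 := by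
      have := hg0; linarith
    rw [hv0] at e0 e1
    have key : (k - 1) * (k - ((m:ℝ) - 2)) = 0 := by nlinarith [e0, e1]
    rcases mul_eq_zero.mp key with h | h
    · left; linarith
    · right; linarith
  · intro hk
    have hco : ((m:ℝ) - 1) * k - k^2/2 = (m:ℝ) - 2 + k^2/2 := by
      rcases hk with h | h <;> subst h <;> ring
    refine ⟨4 * (((m:ℝ) - 1) * k - k^2/2), 2 * k^2 * (2 - (m:ℝ)), fun X Y => ?_⟩
    rw [hRic, hsplit X Y]
    rw [hco]
    ring_nf

end
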